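/- Let μ be a doubling Borel measure on a metric space. Then every σ-porous set (countable union of porous sets) has μ-measure zero. -/

import Mathlib

open Filter Topology Metric Set MeasureTheory

/-- A set is porous with constant `lam ∈ (0,1)`: each of its points sees nearby
relatively large holes in the set. -/
def IsPorousSet {M : Type*} [MetricSpace M] (E : Set M) : Prop :=
  ∃ lam : ℝ, 0 < lam ∧ lam < 1 ∧ ∀ a ∈ E, ∃ x : ℕ → M, Tendsto x atTop (𝓝 a) ∧
    (∀ n, x n ≠ a) ∧ ∀ n, Metric.ball (x n) (lam * dist a (x n)) ∩ E = ∅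

open scoped ENNReal in
theorem stmt_4 {M : Type*} [MetricSpace M] [MeasurableSpace M] [BorelSpace M]
    (μ : Measure M) [IsLocallyFiniteMeasure μ] (hμ : μ ≠ 0)
    (C : NNReal) (hC : 0 < C)
    (hdoubling : ∀ (x : M) (r : ℝ), 0 < r →
      μ (Metric.ball x (2 * r)) ≤ (C : ENNReal) * μ (Metric.ball x r))
    (E : ℕ → Set M) (hE : ∀ n, IsPorousSet (E n)) :
    μ (⋃ n, E n) = 0 := by
  classical
  rcases isEmpty_or_nonempty M with hM | hM
  · have h0 : (⋃ n, E n) = (∅ : Set M) := eq_empty_of_isEmpty _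
    simp [h0]
  -- iterated doubling
  have hdk : ∀ (k : ℕ) (x : M) (r : ℝ), 0 < r →
      μ (ball x (2 ^ k * r)) ≤ (C : ENNReal) ^ k * μ (ball x r) := by
    intro k
    induction k with
    | zero => intro x r hr; simp
    | succ k ih =>
      intro x r hr
      have h1 : (2 : ℝ) ^ (k + 1) * r = 2 * (2 ^ k * r) := by ring
      rw [h1]
      calc μ (ball x (2 * (2 ^ k * r))) ≤ (C : ENNReal) * μ (ball x (2 ^ k * r)) :=
            hdoubling x _ (by positivity)
        _ ≤ (C : ENNReal) * ((C : ENNReal) ^ k * μ (ball x r)) := by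
            exact mul_le_mul_right (ih x r hr) _
        _ = (C : ENNReal) ^ (k + 1) * μ (ball x r) := by ring
  -- all balls have finite measure
  have hfin : ∀ (x : M) (r : ℝ), μ (ball x r) ≠ ∞ := by
    intro x r
    obtain ⟨s, hs, hsfin⟩ := μ.finiteAt_nhds x
    rcases Metric.mem_nhds_iff.1 hs with ⟨r0, hr0, hball⟩
    obtain ⟨k, hk⟩ := pow_unbounded_of_one_lt (r / r0) one_lt_two
    have hrk : r ≤ 2 ^ k * r0 := by
      rw [div_lt_iff₀ hr0] at hk; linarith
    have : μ (ball x r) ≤ (C : ENNReal) ^ k * μ s :=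
      calc μ (ball x r) ≤ μ (ball x (2 ^ k * r0)) := measure_mono (ball_subset_ball hrk)
        _ ≤ (C : ENNReal) ^ k * μ (ball x r0) := hdk k x r0 hr0
        _ ≤ (C : ENNReal) ^ k * μ s := mul_le_mul_right (measure_mono hball) _
    exact (this.trans_lt (ENNReal.mul_lt_top (ENNReal.pow_lt_top ENNReal.coe_lt_top) hsfin)).ne
  -- all balls have positive measure
  have hpos : ∀ (x : M) (r : ℝ), 0 < r → 0 < μ (ball x r) := by
    intro x r hr
    by_contra h
    push_neg at h
    have h0 : μ (ball x r) = 0 := le_antisymm h (zero_le)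
    have hall : ∀ k : ℕ, μ (ball x (2 ^ k * r)) = 0 := fun k =>
      le_antisymm (by simpa [h0] using hdk k x r hr) (zero_le)
    have huniv : (univ : Set M) ⊆ ⋃ k : ℕ, ball x (2 ^ k * r) := by
      intro y _
      obtain ⟨k, hk⟩ := pow_unbounded_of_one_lt (dist y x / r) one_lt_two
      rw [div_lt_iff₀ hr] at hk
      exact mem_iUnion.2 ⟨k, by rw [mem_ball]; linarith⟩
    have : μ univ = 0 :=
      le_antisymm ((measure_mono huniv).trans (measure_iUnion_null hall).le) (zero_le)
    exact hμ (Measure.measure_univ_eq_zero.mp this)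
  -- finite ε-nets for balls
  have hnet : ∀ (x : M) (r ε : ℝ), 0 < ε → ∃ s : Finset M, ball x r ⊆ ⋃ y ∈ s, ball y ε := by
    intro x r ε hε
    by_contra hcon
    push_neg at hcon
    have hr : 0 < r := by
      by_contra hr
      exact hcon ∅ (by simp [ball_eq_empty.2 (not_lt.1 hr)])
    have hchoice : ∀ s : Finset M, ∃ z, z ∈ ball x r ∧ z ∉ ⋃ y ∈ s, ball y ε := fun s =>
      Set.not_subset.1 (hcon s)
    choose p hp1 hp2 using hchoice
    let v : ℕ → Finset M := fun n => Nat.rec ∅ (fun _ t => insert (p t) t) n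
    have hv_mono : Monotone v := monotone_nat_of_le_succ fun n => Finset.subset_insert _ _
    set u : ℕ → M := fun n => p (v n) with hu_def
    have hu_ball : ∀ n, u n ∈ ball x r := fun n => hp1 (v n)
    have hu_mem : ∀ i j, i < j → u i ∈ v j := fun i j hij =>
      hv_mono hij (Finset.mem_insert_self (p (v i)) (v i))
    have hu_sep : ∀ i j, i < j → ε ≤ dist (u j) (u i) := by
      intro i j hij
      by_contra hlt
      push_neg at hlt
      exact hp2 (v j) (mem_iUnion₂.2 ⟨u i, hu_mem i j hij, mem_ball.2 hlt⟩)
    have hu_sep' : ∀ i j, i ≠ j → ε ≤ dist (u i) (u j) := by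
      intro i j h
      rcases h.lt_or_gt with h' | h'
      · rw [dist_comm]; exact hu_sep i j h'
      · exact hu_sep j i h'
    obtain ⟨k, hk⟩ := pow_unbounded_of_one_lt ((2 * r + ε) / (ε / 2)) one_lt_two
    have hk' : 2 * r + ε ≤ 2 ^ k * (ε / 2) := by
      rw [div_lt_iff₀ (by linarith)] at hk; linarith
    have hlow : ∀ i : ℕ, μ (ball x (r + ε)) ≤ (C : ENNReal) ^ k * μ (ball (u i) (ε / 2)) := by
      intro i
      have hsub : ball x (r + ε) ⊆ ball (u i) (2 ^ k * (ε / 2)) := by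
        intro y hy
        rw [mem_ball] at hy ⊢
        have h1 : dist (u i) x < r := mem_ball.1 (hu_ball i)
        calc dist y (u i) ≤ dist y x + dist x (u i) := dist_triangle _ _ _
          _ < (r + ε) + r := by rw [dist_comm x (u i)]; linarith
          _ ≤ 2 ^ k * (ε / 2) := by linarith
      calc μ (ball x (r + ε)) ≤ μ (ball (u i) (2 ^ k * (ε / 2))) := measure_mono hsub
        _ ≤ (C : ENNReal) ^ k * μ (ball (u i) (ε / 2)) := hdk k _ _ (by linarith)
    obtain ⟨N, hN⟩ := ENNReal.exists_nat_gt
      (show ((C : ENNReal) ^ k) ≠ ∞ from ENNReal.pow_ne_top ENNReal.coe_ne_top)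
    have hpair : (↑(Finset.range N) : Set ℕ).PairwiseDisjoint fun i => ball (u i) (ε / 2) := by
      intro i _ j _ hij
      refine Set.disjoint_left.2 fun z hzi hzj => ?_
      rw [mem_ball] at hzi hzj
      have h1 : dist (u i) (u j) ≤ dist z (u i) + dist z (u j) := dist_triangle_left _ _ _
      have h2 := hu_sep' i j hij
      linarith
    have hsum : ∑ i ∈ Finset.range N, μ (ball (u i) (ε / 2)) =
        μ (⋃ i ∈ Finset.range N, ball (u i) (ε / 2)) :=
      (measure_biUnion_finset hpair fun i _ => measurableSet_ball).symm
    have hUsub : (⋃ i ∈ Finset.range N, ball (u i) (ε / 2)) ⊆ ball x (r + ε) := by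
      refine iUnion₂_subset fun i _ => fun z hz => ?_
      rw [mem_ball] at hz ⊢
      have h1 : dist (u i) x < r := mem_ball.1 (hu_ball i)
      calc dist z x ≤ dist z (u i) + dist (u i) x := dist_triangle _ _ _
        _ < ε / 2 + r := by linarith
        _ ≤ r + ε := by linarith
    set m := μ (ball x (r + ε)) with hm_def
    have hm0 : m ≠ 0 := (hpos x (r + ε) (by linarith)).ne'
    have hmt : m ≠ ∞ := hfin x (r + ε)
    have hle : (N : ENNReal) * m ≤ (C : ENNReal) ^ k * m := by
      calc (N : ENNReal) * m = ∑ _i ∈ Finset.range N, m := by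
            simp [Finset.sum_const, nsmul_eq_mul]
        _ ≤ ∑ i ∈ Finset.range N, (C : ENNReal) ^ k * μ (ball (u i) (ε / 2)) :=
            Finset.sum_le_sum fun i _ => hlow i
        _ = (C : ENNReal) ^ k * ∑ i ∈ Finset.range N, μ (ball (u i) (ε / 2)) := by
            rw [Finset.mul_sum]
        _ = (C : ENNReal) ^ k * μ (⋃ i ∈ Finset.range N, ball (u i) (ε / 2)) := by rw [hsum]
        _ ≤ (C : ENNReal) ^ k * m := mul_le_mul_right (measure_mono hUsub) _
    have hlt : (C : ENNReal) ^ k * m < (N : ENNReal) * m :=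
      by rw [mul_comm _ m, mul_comm _ m]; exact ENNReal.mul_lt_mul_right hm0 hmt hN
    exact absurd (hle.trans_lt hlt) (lt_irrefl _)
  -- second countability
  haveI : SecondCountableTopology M := by
    apply Metric.secondCountable_of_almost_dense_set
    intro ε hε
    obtain ⟨x0⟩ := hM
    choose s hs using fun k : ℕ => hnet x0 (k + 1) ε hε
    refine ⟨⋃ k : ℕ, (s k : Set M), countable_iUnion fun k => (s k).countable_toSet, ?_⟩
    intro x
    obtain ⟨k, hk⟩ := exists_nat_ge (dist x x0)
    have hx : x ∈ ball x0 (k + 1) := by rw [mem_ball]; linarith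
    obtain ⟨y, hy, hxy⟩ := mem_iUnion₂.1 (hs k hx)
    exact ⟨y, mem_iUnion.2 ⟨k, hy⟩, (mem_ball.1 hxy).le⟩
  -- uniformly locally doubling
  haveI : IsUnifLocDoublingMeasure μ := by
    refine ⟨⟨C ^ 2, ?_⟩⟩
    filter_upwards [self_mem_nhdsWithin] with ε hε
    have hε' : (0 : ℝ) < ε := hε
    intro x
    calc μ (closedBall x (2 * ε)) ≤ μ (ball x (2 * (2 * ε))) :=
          measure_mono (closedBall_subset_ball (by linarith))
      _ ≤ (C : ENNReal) * μ (ball x (2 * ε)) := hdoubling x _ (by linarith)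
      _ ≤ (C : ENNReal) * ((C : ENNReal) * μ (ball x ε)) :=
          mul_le_mul_right (hdoubling x ε hε') _
      _ = ((C ^ 2 : NNReal) : ENNReal) * μ (ball x ε) := by push_cast; ring
      _ ≤ ((C ^ 2 : NNReal) : ENNReal) * μ (closedBall x ε) :=
          mul_le_mul_right (measure_mono ball_subset_closedBall) _
  -- main argument: each porous set is null
  refine measure_iUnion_null fun n => ?_
  obtain ⟨lam, hlam0, hlam1, hpor⟩ := hE n
  set S := E n with hS_def
  obtain ⟨k0, hk0⟩ := pow_unbounded_of_one_lt (2 / lam) one_lt_two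
  have hk0' : 2 ≤ 2 ^ k0 * lam := by
    rw [div_lt_iff₀ hlam0] at hk0; nlinarith
  have hCk0 : ((C : ENNReal) ^ k0) ≠ 0 := by
    simp [pow_ne_zero, ENNReal.coe_ne_zero, hC.ne']
  have hCkt : ((C : ENNReal) ^ k0) ≠ ∞ := ENNReal.pow_ne_top ENNReal.coe_ne_top
  set c : ENNReal := ((C : ENNReal) ^ k0)⁻¹ with hc_def
  have main := IsUnifLocDoublingMeasure.ae_tendsto_measure_inter_div μ S 1
  have h0 := ae_iff.1 main
  have hsub : S ⊆ {a | ¬ ∀ {ι : Type} {l : Filter ι} (w : ι → M) (δ : ι → ℝ)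
      (_ : Tendsto δ l (𝓝[>] 0)) (_ : ∀ᶠ j in l, a ∈ closedBall (w j) (1 * δ j)),
      Tendsto (fun j => μ (S ∩ closedBall (w j) (δ j)) / μ (closedBall (w j) (δ j))) l
        (𝓝 1)} := by
    intro a ha
    simp only [mem_setOf_eq]
    intro hP
    obtain ⟨xs, hxs_tendsto, hxs_ne, hxs_hole⟩ := hpor a ha
    set d : ℕ → ℝ := fun n => dist a (xs n) with hd_def
    have hd_pos : ∀ n, 0 < d n := fun n => dist_pos.2 fun h => hxs_ne n h.symm
    have hd_tendsto : Tendsto d atTop (𝓝[>] 0) := by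
      apply tendsto_nhdsWithin_of_tendsto_nhds_of_eventually_within
      · have h := ((tendsto_const_nhds : Tendsto (fun _ : ℕ => a) atTop (𝓝 a)).dist
          hxs_tendsto)
        simpa using h
      · exact Eventually.of_forall fun n => hd_pos n
    have hmem : ∀ᶠ n in atTop, a ∈ closedBall (xs n) (1 * d n) :=
      Eventually.of_forall fun n => by
        rw [mem_closedBall, one_mul]
    have hten := hP xs d hd_tendsto hmem
    have hub : ∀ n, μ (S ∩ closedBall (xs n) (d n)) / μ (closedBall (xs n) (d n)) ≤ 1 - c := by
      intro n
      set B := closedBall (xs n) (d n) with hB_def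
      set H := ball (xs n) (lam * d n) with hH_def
      have hHB : H ⊆ B :=
        (ball_subset_ball (by nlinarith [hd_pos n])).trans ball_subset_closedBall
      have hBfin : μ B ≠ ∞ := by
        refine ne_top_of_le_ne_top (hfin (xs n) (d n + 1)) (measure_mono ?_)
        exact closedBall_subset_ball (by linarith [hd_pos n])
      have hBpos : 0 < μ B :=
        (hpos (xs n) (d n) (hd_pos n)).trans_le (measure_mono ball_subset_closedBall)
      have key : μ B ≤ (C : ENNReal) ^ k0 * μ H := by
        have hsub2 : B ⊆ ball (xs n) (2 ^ k0 * (lam * d n)) := by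
          apply closedBall_subset_ball
          nlinarith [hd_pos n]
        calc μ B ≤ μ (ball (xs n) (2 ^ k0 * (lam * d n))) := measure_mono hsub2
          _ ≤ (C : ENNReal) ^ k0 * μ H := hdk k0 _ _ (by nlinarith [hd_pos n])
      have hsplit : μ (S ∩ B) + μ H ≤ μ B := by
        have hid := measure_inter_add_diff (μ := μ) B (measurableSet_ball (x := xs n)
          (ε := lam * d n))
        have hBH : B ∩ H = H := inter_eq_self_of_subset_right hHB
        have hSB : S ∩ B ⊆ B \ H := by
          intro z hz
          refine ⟨hz.2, fun hzH => ?_⟩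
          have : z ∈ H ∩ S := ⟨hzH, hz.1⟩
          rw [hH_def] at this
          rw [hxs_hole n] at this
          exact this
        calc μ (S ∩ B) + μ H ≤ μ (B \ H) + μ (B ∩ H) := by
              rw [hBH]; exact add_le_add_left (measure_mono hSB) _
          _ = μ (B ∩ H) + μ (B \ H) := by rw [add_comm]
          _ = μ B := hid
      have hcle : c ≤ μ H / μ B := by
        rw [ENNReal.le_div_iff_mul_le (Or.inl hBpos.ne') (Or.inl hBfin)]
        calc c * μ B ≤ c * ((C : ENNReal) ^ k0 * μ H) := mul_le_mul_right key _
          _ = (c * (C : ENNReal) ^ k0) * μ H := by rw [mul_assoc]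
          _ = μ H := by rw [hc_def, ENNReal.inv_mul_cancel hCk0 hCkt, one_mul]
      have hfrac : μ (S ∩ B) / μ B + c ≤ 1 := by
        calc μ (S ∩ B) / μ B + c ≤ μ (S ∩ B) / μ B + μ H / μ B := add_le_add_right hcle _
          _ = (μ (S ∩ B) + μ H) / μ B := ENNReal.div_add_div_same
          _ ≤ μ B / μ B := by gcongr
          _ ≤ 1 := ENNReal.div_self_le_one
      refine ENNReal.le_sub_of_add_le_right ?_ hfrac
      simp [hc_def, ENNReal.inv_ne_top, hCk0]
    have hle1 := le_of_tendsto hten (Eventually.of_forall hub)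
    have hlt1 : (1 : ENNReal) - c < 1 :=
      ENNReal.sub_lt_self ENNReal.one_ne_top one_ne_zero
        (by simp [hc_def, ENNReal.inv_ne_zero, hCkt])
    exact absurd (hle1.trans_lt hlt1) (lt_irrefl _)
  have h2 : μ.restrict S S = 0 := measure_mono_null hsub h0
  rw [Measure.restrict_apply_self] at h2
  exact h2
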